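/- Let M₁ and M₂ be second-countable prodiscrete abelian topological groups and Λ₁ ⊆ M₁, Λ₂ ⊆ M₂ closed subgroups. Equip M₁ ⊗_ℤ M₂ with the topology generated by subgroups U₁ ⊗ M₂ + M₁ ⊗ U₂ for open subgroups U_i ⊆ M_i, and let M₁ ⊗̂ M₂ denote the completion. Then the closure of the image of Λ₁ ⊗ M₂ + M₁ ⊗ Λ₂ in M₁ ⊗̂ M₂ satisfies: the quotient (M₁ ⊗̂ M₂)/closure is canonically isomorphic to (M₁/Λ₁) ⊗̂ (M₂/Λ₂). -/

import Mathlib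

open scoped TensorProduct
open UniformSpace

/-- The subgroup `A ⊗ M₂ + M₁ ⊗ B` of `M₁ ⊗ M₂` determined by subgroups `A ⊆ M₁`,
`B ⊆ M₂`. -/
noncomputable def mixedSubgroup {M₁ M₂ : Type} [AddCommGroup M₁] [AddCommGroup M₂]
    (A : AddSubgroup M₁) (B : AddSubgroup M₂) : AddSubgroup (M₁ ⊗[ℤ] M₂) :=
  AddSubgroup.closure
    ({x | ∃ a ∈ A, ∃ m : M₂, x = a ⊗ₜ[ℤ] m} ∪ {x | ∃ m : M₁, ∃ b ∈ B, x = m ⊗ₜ[ℤ] b})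

section Aux

variable {M₁ M₂ N₁ N₂ : Type} [AddCommGroup M₁] [AddCommGroup M₂]
  [AddCommGroup N₁] [AddCommGroup N₂]

lemma tmul_left_mem_mixed {A : AddSubgroup M₁} (B : AddSubgroup M₂) {a : M₁} (ha : a ∈ A)
    (m : M₂) : a ⊗ₜ[ℤ] m ∈ mixedSubgroup A B :=
  AddSubgroup.subset_closure (Or.inl ⟨a, ha, m, rfl⟩)

lemma tmul_right_mem_mixed (A : AddSubgroup M₁) {B : AddSubgroup M₂} (m : M₁) {b : M₂}
    (hb : b ∈ B) : m ⊗ₜ[ℤ] b ∈ mixedSubgroup A B :=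
  AddSubgroup.subset_closure (Or.inr ⟨m, b, hb, rfl⟩)

lemma mixedSubgroup_mono {A A' : AddSubgroup M₁} {B B' : AddSubgroup M₂}
    (h₁ : A ≤ A') (h₂ : B ≤ B') : mixedSubgroup A B ≤ mixedSubgroup A' B' := by
  apply (AddSubgroup.closure_le _).2
  rintro x (⟨a, ha, m, rfl⟩ | ⟨m, b, hb, rfl⟩)
  · exact tmul_left_mem_mixed _ (h₁ ha) m
  · exact tmul_right_mem_mixed _ m (h₂ hb)

lemma rTensor_subtype_mem_mixed (A : AddSubgroup M₁) (B : AddSubgroup M₂)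
    (t : A.toIntSubmodule ⊗[ℤ] M₂) :
    LinearMap.rTensor (R := ℤ) M₂ A.toIntSubmodule.subtype t ∈ mixedSubgroup A B := by
  induction t with
  | zero => simpa using (mixedSubgroup A B).zero_mem
  | tmul a m => exact tmul_left_mem_mixed B a.2 m
  | add t₁ t₂ h₁ h₂ => rw [map_add]; exact AddSubgroup.add_mem _ h₁ h₂

lemma lTensor_subtype_mem_mixed (A : AddSubgroup M₁) (B : AddSubgroup M₂)
    (s : M₁ ⊗[ℤ] B.toIntSubmodule) :
    LinearMap.lTensor (R := ℤ) M₁ B.toIntSubmodule.subtype s ∈ mixedSubgroup A B := by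
  induction s with
  | zero => simpa using (mixedSubgroup A B).zero_mem
  | tmul m b => exact tmul_right_mem_mixed A m b.2
  | add t₁ t₂ h₁ h₂ => rw [map_add]; exact AddSubgroup.add_mem _ h₁ h₂

lemma mixedSubgroup_eq (A : AddSubgroup M₁) (B : AddSubgroup M₂) :
    mixedSubgroup A B =
      (LinearMap.range (LinearMap.rTensor (R := ℤ) M₂ A.toIntSubmodule.subtype) ⊔
       LinearMap.range (LinearMap.lTensor (R := ℤ) M₁ B.toIntSubmodule.subtype)).toAddSubgroup := by
  apply le_antisymm
  · apply (AddSubgroup.closure_le _).2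
    rintro x (⟨a, ha, m, rfl⟩ | ⟨m, b, hb, rfl⟩)
    · exact Submodule.mem_sup_left ⟨(⟨a, ha⟩ : A.toIntSubmodule) ⊗ₜ[ℤ] m, rfl⟩
    · exact Submodule.mem_sup_right ⟨m ⊗ₜ[ℤ] (⟨b, hb⟩ : B.toIntSubmodule), rfl⟩
  · intro x hx
    obtain ⟨y, hy, z, hz, rfl⟩ := Submodule.mem_sup.1 hx
    obtain ⟨t, rfl⟩ := hy
    obtain ⟨s, rfl⟩ := hz
    exact AddSubgroup.add_mem _ (rTensor_subtype_mem_mixed A B t)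
      (lTensor_subtype_mem_mixed A B s)

lemma ker_tensor_quot (Λ₁ : AddSubgroup M₁) (Λ₂ : AddSubgroup M₂) :
    LinearMap.ker (TensorProduct.map (QuotientAddGroup.mk' Λ₁).toIntLinearMap
        (QuotientAddGroup.mk' Λ₂).toIntLinearMap) =
      (mixedSubgroup Λ₁ Λ₂).toIntSubmodule := by
  have h₁ : Function.Exact Λ₁.toIntSubmodule.subtype
      (QuotientAddGroup.mk' Λ₁).toIntLinearMap := by
    intro y
    simp only [AddMonoidHom.coe_toIntLinearMap, QuotientAddGroup.mk'_apply,
      QuotientAddGroup.eq_zero_iff]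
    constructor
    · intro hy; exact ⟨⟨y, hy⟩, rfl⟩
    · rintro ⟨⟨a, ha⟩, rfl⟩; exact ha
  have h₂ : Function.Exact Λ₂.toIntSubmodule.subtype
      (QuotientAddGroup.mk' Λ₂).toIntLinearMap := by
    intro y
    simp only [AddMonoidHom.coe_toIntLinearMap, QuotientAddGroup.mk'_apply,
      QuotientAddGroup.eq_zero_iff]
    constructor
    · intro hy; exact ⟨⟨y, hy⟩, rfl⟩
    · rintro ⟨⟨a, ha⟩, rfl⟩; exact ha
  have hs₁ : Function.Surjective (QuotientAddGroup.mk' Λ₁).toIntLinearMap :=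
    QuotientAddGroup.mk'_surjective Λ₁
  have hs₂ : Function.Surjective (QuotientAddGroup.mk' Λ₂).toIntLinearMap :=
    QuotientAddGroup.mk'_surjective Λ₂
  rw [TensorProduct.map_ker h₁ hs₁ h₂ hs₂, sup_comm]
  rw [mixedSubgroup_eq]
  exact (Submodule.toAddSubgroup_toIntSubmodule _).symm

/-- comap compatibility for mixed subgroups. -/
lemma mixed_comap_le (f : M₁ →+ N₁) (g : M₂ →+ N₂) (U₁ : AddSubgroup N₁) (U₂ : AddSubgroup N₂) :
    mixedSubgroup (U₁.comap f) (U₂.comap g) ≤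
      (mixedSubgroup U₁ U₂).comap
        (TensorProduct.map f.toIntLinearMap g.toIntLinearMap).toAddMonoidHom := by
  apply (AddSubgroup.closure_le _).2
  rintro x (⟨a, ha, m, rfl⟩ | ⟨m, b, hb, rfl⟩)
  · show (TensorProduct.map f.toIntLinearMap g.toIntLinearMap) (a ⊗ₜ[ℤ] m) ∈ mixedSubgroup U₁ U₂
    rw [TensorProduct.map_tmul]
    exact tmul_left_mem_mixed (A := U₁) U₂ (AddSubgroup.mem_comap.1 ha) (g m)
  · show (TensorProduct.map f.toIntLinearMap g.toIntLinearMap) (m ⊗ₜ[ℤ] b) ∈ mixedSubgroup U₁ U₂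
    rw [TensorProduct.map_tmul]
    exact tmul_right_mem_mixed (B := U₂) U₁ (f m) (AddSubgroup.mem_comap.1 hb)

/-- map compatibility for mixed subgroups. -/
lemma mixed_map_ge (f : M₁ →+ N₁) (g : M₂ →+ N₂) (hf : Function.Surjective f)
    (hg : Function.Surjective g) (U₁ : AddSubgroup M₁) (U₂ : AddSubgroup M₂) :
    mixedSubgroup (U₁.map f) (U₂.map g) ≤
      AddSubgroup.map (TensorProduct.map f.toIntLinearMap g.toIntLinearMap).toAddMonoidHom
        (mixedSubgroup U₁ U₂) := by
  apply (AddSubgroup.closure_le _).2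
  rintro x (⟨a, ⟨a₀, ha₀, rfl⟩, m, rfl⟩ | ⟨m, b, ⟨b₀, hb₀, rfl⟩, rfl⟩)
  · obtain ⟨m₀, rfl⟩ := hg m
    exact ⟨a₀ ⊗ₜ[ℤ] m₀, tmul_left_mem_mixed U₂ ha₀ m₀, by
      simp [TensorProduct.map_tmul]⟩
  · obtain ⟨m₀, rfl⟩ := hf m
    exact ⟨m₀ ⊗ₜ[ℤ] b₀, tmul_right_mem_mixed U₁ m₀ hb₀, by
      simp [TensorProduct.map_tmul]⟩

lemma firstCountable_of_nhds_zero {G : Type*} [AddCommGroup G]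
    [TopologicalSpace G] [IsTopologicalAddGroup G]
    (h : (nhds (0 : G)).IsCountablyGenerated) : FirstCountableTopology G := by
  constructor
  intro x
  rw [← map_add_left_nhds_zero x]
  exact @Filter.map.isCountablyGenerated _ _ _ h _

lemma exists_openAddSubgroup_basis (M : Type*) [AddCommGroup M] [TopologicalSpace M]
    [IsTopologicalAddGroup M] [FirstCountableTopology M] [NonarchimedeanAddGroup M] :
    ∃ V : ℕ → OpenAddSubgroup M,
      (nhds (0 : M)).HasBasis (fun _ => True) (fun n => (V n : Set M)) := by
  obtain ⟨s, hs⟩ := (nhds (0 : M)).exists_antitone_basis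
  choose V hV using fun n => NonarchimedeanAddGroup.is_nonarchimedean (s n) (hs.mem n)
  refine ⟨V, ⟨fun t => ⟨fun ht => ?_, ?_⟩⟩⟩
  · obtain ⟨n, -, hn⟩ := hs.toHasBasis.mem_iff.1 ht
    exact ⟨n, trivial, (hV n).trans hn⟩
  · rintro ⟨n, -, hn⟩
    exact Filter.mem_of_superset ((V n).isOpen.mem_nhds (V n).zero_mem) hn

end Aux

/-- let M₁, M₂ be second-countable prodiscrete abelian groups and
Λᵢ ⊆ Mᵢ closed subgroups. Equip M₁ ⊗ M₂ (and likewise (M₁/Λ₁) ⊗ (M₂/Λ₂)) with the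
linear topology in which the subgroups U₁ ⊗ M₂ + M₁ ⊗ U₂ (for open subgroups Uᵢ ⊆ Mᵢ)
form a neighbourhood basis of 0, and let ⊗̂ denote the corresponding completion. Then the
quotient of M₁ ⊗̂ M₂ by the closure of the image of Λ₁ ⊗ M₂ + M₁ ⊗ Λ₂ is canonically
isomorphic, as a topological group, to (M₁/Λ₁) ⊗̂ (M₂/Λ₂). -/
theorem stmt_19 {M₁ M₂ : Type}
    [AddCommGroup M₁] [UniformSpace M₁] [IsUniformAddGroup M₁] [CompleteSpace M₁]
    [SecondCountableTopology M₁] [NonarchimedeanAddGroup M₁]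
    [AddCommGroup M₂] [UniformSpace M₂] [IsUniformAddGroup M₂] [CompleteSpace M₂]
    [SecondCountableTopology M₂] [NonarchimedeanAddGroup M₂]
    (Λ₁ : AddSubgroup M₁) (hΛ₁ : IsClosed (Λ₁ : Set M₁))
    (Λ₂ : AddSubgroup M₂) (hΛ₂ : IsClosed (Λ₂ : Set M₂))
    [UniformSpace (M₁ ⊗[ℤ] M₂)] [IsUniformAddGroup (M₁ ⊗[ℤ] M₂)]
    (hbasis : ∀ s : Set (M₁ ⊗[ℤ] M₂), s ∈ nhds (0 : M₁ ⊗[ℤ] M₂) ↔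
      ∃ (U₁ : AddSubgroup M₁) (U₂ : AddSubgroup M₂), IsOpen (U₁ : Set M₁) ∧
        IsOpen (U₂ : Set M₂) ∧ (mixedSubgroup U₁ U₂ : Set (M₁ ⊗[ℤ] M₂)) ⊆ s)
    [UniformSpace ((M₁ ⧸ Λ₁) ⊗[ℤ] (M₂ ⧸ Λ₂))]
    [IsUniformAddGroup ((M₁ ⧸ Λ₁) ⊗[ℤ] (M₂ ⧸ Λ₂))]
    (hbasis' : ∀ s : Set ((M₁ ⧸ Λ₁) ⊗[ℤ] (M₂ ⧸ Λ₂)),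
      s ∈ nhds (0 : (M₁ ⧸ Λ₁) ⊗[ℤ] (M₂ ⧸ Λ₂)) ↔
      ∃ (U₁ : AddSubgroup (M₁ ⧸ Λ₁)) (U₂ : AddSubgroup (M₂ ⧸ Λ₂)),
        IsOpen (U₁ : Set (M₁ ⧸ Λ₁)) ∧ IsOpen (U₂ : Set (M₂ ⧸ Λ₂)) ∧
        (mixedSubgroup U₁ U₂ : Set ((M₁ ⧸ Λ₁) ⊗[ℤ] (M₂ ⧸ Λ₂))) ⊆ s) :
    ∃ e : (Completion (M₁ ⊗[ℤ] M₂) ⧸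
        AddSubgroup.topologicalClosure
          (AddSubgroup.map (Completion.toCompl : (M₁ ⊗[ℤ] M₂) →+ Completion (M₁ ⊗[ℤ] M₂))
            (mixedSubgroup Λ₁ Λ₂)))
      ≃+ Completion ((M₁ ⧸ Λ₁) ⊗[ℤ] (M₂ ⧸ Λ₂)),
      Continuous e ∧ Continuous e.symm ∧
      ∀ (m₁ : M₁) (m₂ : M₂),
        e (QuotientAddGroup.mk (Completion.toCompl (m₁ ⊗ₜ[ℤ] m₂ : M₁ ⊗[ℤ] M₂)))
          = Completion.toCompl
              ((QuotientAddGroup.mk m₁ : M₁ ⧸ Λ₁) ⊗ₜ[ℤ] (QuotientAddGroup.mk m₂ : M₂ ⧸ Λ₂)) := by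
  classical
  -- the quotient maps
  set q₁ : M₁ →+ M₁ ⧸ Λ₁ := QuotientAddGroup.mk' Λ₁ with hq₁
  set q₂ : M₂ →+ M₂ ⧸ Λ₂ := QuotientAddGroup.mk' Λ₂ with hq₂
  set πₗ := TensorProduct.map q₁.toIntLinearMap q₂.toIntLinearMap with hπₗ
  set π : (M₁ ⊗[ℤ] M₂) →+ ((M₁ ⧸ Λ₁) ⊗[ℤ] (M₂ ⧸ Λ₂)) := πₗ.toAddMonoidHom with hπdef
  have hq₁s : Function.Surjective q₁ := QuotientAddGroup.mk'_surjective Λ₁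
  have hq₂s : Function.Surjective q₂ := QuotientAddGroup.mk'_surjective Λ₂
  have hq₁c : Continuous q₁ := by
    rw [hq₁, QuotientAddGroup.coe_mk']; exact (QuotientAddGroup.isOpenQuotientMap_mk).continuous
  have hq₂c : Continuous q₂ := by
    rw [hq₂, QuotientAddGroup.coe_mk']; exact (QuotientAddGroup.isOpenQuotientMap_mk).continuous
  have hq₁o : IsOpenMap q₁ := by
    rw [hq₁, QuotientAddGroup.coe_mk']; exact QuotientAddGroup.isOpenMap_coe
  have hq₂o : IsOpenMap q₂ := by
    rw [hq₂, QuotientAddGroup.coe_mk']; exact QuotientAddGroup.isOpenMap_coe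
  have hπs : Function.Surjective π :=
    TensorProduct.map_surjective hq₁s hq₂s
  have hkerπ : ∀ x, π x = 0 ↔ x ∈ mixedSubgroup Λ₁ Λ₂ := by
    intro x
    rw [show (π x = 0) ↔ (πₗ x = 0) from Iff.rfl, ← LinearMap.mem_ker, hπₗ,
      ker_tensor_quot Λ₁ Λ₂]
    exact Iff.rfl
  -- neighbourhoods of 0
  have hmix_nhds : ∀ (U₁ : AddSubgroup M₁) (U₂ : AddSubgroup M₂), IsOpen (U₁ : Set M₁) →
      IsOpen (U₂ : Set M₂) →
      (mixedSubgroup U₁ U₂ : Set (M₁ ⊗[ℤ] M₂)) ∈ nhds (0 : M₁ ⊗[ℤ] M₂) :=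
    fun U₁ U₂ h₁ h₂ => (hbasis _).2 ⟨U₁, U₂, h₁, h₂, subset_rfl⟩
  have hmix_nhds' : ∀ (U₁ : AddSubgroup (M₁ ⧸ Λ₁)) (U₂ : AddSubgroup (M₂ ⧸ Λ₂)),
      IsOpen (U₁ : Set (M₁ ⧸ Λ₁)) → IsOpen (U₂ : Set (M₂ ⧸ Λ₂)) →
      (mixedSubgroup U₁ U₂ : Set ((M₁ ⧸ Λ₁) ⊗[ℤ] (M₂ ⧸ Λ₂))) ∈
        nhds (0 : (M₁ ⧸ Λ₁) ⊗[ℤ] (M₂ ⧸ Λ₂)) :=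
    fun U₁ U₂ h₁ h₂ => (hbasis' _).2 ⟨U₁, U₂, h₁, h₂, subset_rfl⟩
  -- continuity of π
  have hπ0 : Filter.Tendsto π (nhds 0) (nhds 0) := by
    intro s hs
    obtain ⟨U₁, U₂, hU₁, hU₂, hsub⟩ := (hbasis' s).1 hs
    rw [Filter.mem_map]
    refine Filter.mem_of_superset (hmix_nhds (U₁.comap q₁) (U₂.comap q₂)
      (hU₁.preimage hq₁c) (hU₂.preimage hq₂c)) ?_
    intro x hx
    exact hsub (mixed_comap_le q₁ q₂ U₁ U₂ hx)
  have hπc : Continuous π := by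
    apply continuous_of_continuousAt_zero π
    simpa only [ContinuousAt, map_zero] using hπ0
  -- openness of π
  have hkey : nhds (0 : (M₁ ⧸ Λ₁) ⊗[ℤ] (M₂ ⧸ Λ₂)) ≤ Filter.map π (nhds 0) := by
    intro s hs
    rw [Filter.mem_map] at hs
    obtain ⟨U₁, U₂, hU₁, hU₂, hsub⟩ := (hbasis _).1 hs
    refine Filter.mem_of_superset (hmix_nhds' (U₁.map q₁) (U₂.map q₂) ?_ ?_) ?_
    · rw [AddSubgroup.coe_map]; exact hq₁o _ hU₁
    · rw [AddSubgroup.coe_map]; exact hq₂o _ hU₂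
    · intro x hx
      obtain ⟨y, hy, rfl⟩ := mixed_map_ge q₁ q₂ hq₁s hq₂s U₁ U₂ hx
      exact hsub hy
  have hπo : IsOpenMap π := by
    apply IsOpenMap.of_nhds_le
    intro g
    calc nhds (π g) = Filter.map (π g + ·) (nhds 0) := (map_add_left_nhds_zero _).symm
      _ ≤ Filter.map (π g + ·) (Filter.map π (nhds 0)) := Filter.map_mono hkey
      _ = Filter.map π (Filter.map (g + ·) (nhds 0)) := by
          rw [Filter.map_map, Filter.map_map]
          congr 1
          funext x
          simp [map_add]
      _ = Filter.map π (nhds g) := by rw [map_add_left_nhds_zero]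
  have hOQ : IsOpenQuotientMap π := ⟨hπs, hπc, hπo⟩
  -- countability
  obtain ⟨V, hVb⟩ := exists_openAddSubgroup_basis M₁
  obtain ⟨W, hWb⟩ := exists_openAddSubgroup_basis M₂
  have hGb : (nhds (0 : M₁ ⊗[ℤ] M₂)).HasBasis (fun _ : ℕ × ℕ => True)
      (fun p => (mixedSubgroup (V p.1).toAddSubgroup (W p.2).toAddSubgroup :
        Set (M₁ ⊗[ℤ] M₂))) := by
    constructor
    intro t
    rw [hbasis t]
    constructor
    · rintro ⟨U₁, U₂, hU₁, hU₂, hsub⟩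
      obtain ⟨n, -, hn⟩ := hVb.mem_iff.1 (hU₁.mem_nhds U₁.zero_mem)
      obtain ⟨m, -, hm⟩ := hWb.mem_iff.1 (hU₂.mem_nhds U₂.zero_mem)
      refine ⟨(n, m), trivial, subset_trans ?_ hsub⟩
      exact SetLike.coe_subset_coe.2
        (mixedSubgroup_mono (fun x hx => hn hx) (fun x hx => hm hx))
    · rintro ⟨p, -, hp⟩
      exact ⟨(V p.1).toAddSubgroup, (W p.2).toAddSubgroup, (V p.1).isOpen, (W p.2).isOpen, hp⟩
  haveI hGcg : (nhds (0 : M₁ ⊗[ℤ] M₂)).IsCountablyGenerated := hGb.isCountablyGenerated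
  haveI : FirstCountableTopology (M₁ ⊗[ℤ] M₂) := firstCountable_of_nhds_zero hGcg
  have hCb : (nhds (0 : Completion (M₁ ⊗[ℤ] M₂))).HasBasis (fun _ : ℕ × ℕ => True)
      (fun p => closure ((Completion.toCompl : (M₁ ⊗[ℤ] M₂) →+ _) ''
        (mixedSubgroup (V p.1).toAddSubgroup (W p.2).toAddSubgroup : Set (M₁ ⊗[ℤ] M₂)))) := by
    constructor
    intro t
    constructor
    · intro ht
      obtain ⟨C, ⟨hC, hCc⟩, hCt⟩ := (closed_nhds_basis _).mem_iff.1 ht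
      have hpre : (Completion.toCompl : (M₁ ⊗[ℤ] M₂) →+ _) ⁻¹' C ∈
          nhds (0 : M₁ ⊗[ℤ] M₂) := by
        apply (Completion.continuous_coe _).continuousAt.preimage_mem_nhds
        rwa [show ((0 : M₁ ⊗[ℤ] M₂) : Completion (M₁ ⊗[ℤ] M₂)) = 0 from Completion.coe_zero]
      obtain ⟨p, -, hp⟩ := hGb.mem_iff.1 hpre
      exact ⟨p, trivial, (closure_minimal (Set.image_subset_iff.2 hp) hCc).trans hCt⟩
    · rintro ⟨p, -, hp⟩
      refine Filter.mem_of_superset ?_ hp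
      have := (Completion.isDenseInducing_toCompl (M₁ ⊗[ℤ] M₂)).closure_image_mem_nhds
        (hGb.mem_of_mem (i := p) trivial)
      rwa [map_zero] at this
  haveI hCcg : (nhds (0 : Completion (M₁ ⊗[ℤ] M₂))).IsCountablyGenerated :=
    hCb.isCountablyGenerated
  haveI : FirstCountableTopology (Completion (M₁ ⊗[ℤ] M₂)) :=
    firstCountable_of_nhds_zero hCcg
  -- the closed subgroup N
  set N : AddSubgroup (Completion (M₁ ⊗[ℤ] M₂)) :=
    AddSubgroup.topologicalClosure
      (AddSubgroup.map (Completion.toCompl : (M₁ ⊗[ℤ] M₂) →+ Completion (M₁ ⊗[ℤ] M₂))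
        (mixedSubgroup Λ₁ Λ₂)) with hNdef
  letI : UniformSpace (Completion (M₁ ⊗[ℤ] M₂) ⧸ N) := IsTopologicalAddGroup.rightUniformSpace _
  haveI : IsUniformAddGroup (Completion (M₁ ⊗[ℤ] M₂) ⧸ N) := isUniformAddGroup_of_addCommGroup
  haveI hNc : IsClosed (N : Set (Completion (M₁ ⊗[ℤ] M₂))) :=
    AddSubgroup.isClosed_topologicalClosure _
  haveI : CompleteSpace (Completion (M₁ ⊗[ℤ] M₂) ⧸ N) := QuotientAddGroup.completeSpace_right _ N
  haveI : T3Space (Completion (M₁ ⊗[ℤ] M₂) ⧸ N) := inferInstance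
  -- the map ψ : M₁ ⊗ M₂ → Ĝ ⧸ N
  set ψ : (M₁ ⊗[ℤ] M₂) →+ (Completion (M₁ ⊗[ℤ] M₂) ⧸ N) :=
    (QuotientAddGroup.mk' N).comp (Completion.toCompl) with hψdef
  have hmkc : Continuous (QuotientAddGroup.mk :
      Completion (M₁ ⊗[ℤ] M₂) → Completion (M₁ ⊗[ℤ] M₂) ⧸ N) :=
    (QuotientAddGroup.isOpenQuotientMap_mk).continuous
  have hψc : Continuous ψ := hmkc.comp Completion.continuous_toCompl
  have hπψker : (AddMonoidHom.ker π) ≤ (AddMonoidHom.ker ψ) := by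
    intro x hx
    have hxm : x ∈ mixedSubgroup Λ₁ Λ₂ := (hkerπ x).1 (AddMonoidHom.mem_ker.1 hx)
    have hmem : Completion.toCompl x ∈ N :=
      (AddSubgroup.le_topologicalClosure _) ⟨x, hxm, rfl⟩
    show ψ x = 0
    exact (QuotientAddGroup.eq_zero_iff _).2 hmem
  set e₀ : ((M₁ ⊗[ℤ] M₂) ⧸ (AddMonoidHom.ker π)) ≃+ ((M₁ ⧸ Λ₁) ⊗[ℤ] (M₂ ⧸ Λ₂)) :=
    QuotientAddGroup.quotientKerEquivOfSurjective π hπs with he₀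
  set φ₀ := QuotientAddGroup.lift (AddMonoidHom.ker π) ψ hπψker with hφ₀
  set φ : ((M₁ ⧸ Λ₁) ⊗[ℤ] (M₂ ⧸ Λ₂)) →+ (Completion (M₁ ⊗[ℤ] M₂) ⧸ N) :=
    φ₀.comp e₀.symm.toAddMonoidHom with hφdef
  have hφπ : ∀ x, φ (π x) = ψ x := by
    intro x
    have h1 : e₀.symm (π x) = QuotientAddGroup.mk x := by
      apply e₀.injective
      rw [AddEquiv.apply_symm_apply]
      exact rfl
    show φ₀ (e₀.symm (π x)) = ψ x
    rw [h1]
    exact QuotientAddGroup.lift_mk' (AddMonoidHom.ker π) hπψker x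
  have hφc : Continuous φ := by
    rw [← hOQ.continuous_comp_iff]
    have h2 : ⇑φ ∘ ⇑π = ⇑ψ := funext hφπ
    rw [h2]; exact hψc
  -- the completion of π
  set piC : Completion (M₁ ⊗[ℤ] M₂) →+ Completion ((M₁ ⧸ Λ₁) ⊗[ℤ] (M₂ ⧸ Λ₂)) :=
    π.completion hπc with hpiCdef
  have hpiCc : Continuous piC := AddMonoidHom.continuous_completion π hπc
  have hNker : N ≤ (AddMonoidHom.ker piC) := by
    apply AddSubgroup.topologicalClosure_minimal
    · rintro y ⟨x₀, hx₀, rfl⟩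
      show piC (Completion.toCompl x₀) = 0
      have h3 : (Completion.toCompl x₀ : Completion (M₁ ⊗[ℤ] M₂)) = (x₀ : Completion _) := rfl
      rw [h3, hpiCdef, AddMonoidHom.completion_coe, (hkerπ x₀).2 hx₀, Completion.coe_zero]
    · have h4 : ((AddMonoidHom.ker piC) : Set (Completion (M₁ ⊗[ℤ] M₂))) = piC ⁻¹' {0} := rfl
      rw [h4]
      exact isClosed_singleton.preimage hpiCc
  set χ : (Completion (M₁ ⊗[ℤ] M₂) ⧸ N) →+ Completion ((M₁ ⧸ Λ₁) ⊗[ℤ] (M₂ ⧸ Λ₂)) :=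
    QuotientAddGroup.lift N piC hNker with hχdef
  have hts : ∀ x : M₁ ⊗[ℤ] M₂,
      Completion.toCompl x = (x : Completion (M₁ ⊗[ℤ] M₂)) := fun _ => rfl
  have hχmk : ∀ x : Completion (M₁ ⊗[ℤ] M₂), χ (QuotientAddGroup.mk x) = piC x :=
    fun x => QuotientAddGroup.lift_mk' N hNker x
  have hχc : Continuous χ := by
    rw [← (QuotientAddGroup.isOpenQuotientMap_mk).continuous_comp_iff]
    have h5 : ⇑χ ∘ (QuotientAddGroup.mk :
        Completion (M₁ ⊗[ℤ] M₂) → Completion (M₁ ⊗[ℤ] M₂) ⧸ N) = ⇑piC := funext hχmk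
    rw [h5]; exact hpiCc
  -- extension of φ
  set phiC : Completion ((M₁ ⧸ Λ₁) ⊗[ℤ] (M₂ ⧸ Λ₂)) →+ (Completion (M₁ ⊗[ℤ] M₂) ⧸ N) :=
    φ.extension hφc with hphiCdef
  have hphiCc : Continuous phiC := AddMonoidHom.continuous_extension φ hφc
  have hphiCcoe : ∀ h : (M₁ ⧸ Λ₁) ⊗[ℤ] (M₂ ⧸ Λ₂), phiC (h : Completion _) = φ h :=
    fun h => AddMonoidHom.extension_coe φ hφc h
  -- round trips
  have hχφ : ∀ h : (M₁ ⧸ Λ₁) ⊗[ℤ] (M₂ ⧸ Λ₂), χ (φ h) = (h : Completion _) := by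
    intro h
    obtain ⟨g, rfl⟩ := hπs h
    rw [hφπ g]
    have h6 : ψ g = QuotientAddGroup.mk (Completion.toCompl g) := rfl
    rw [h6, hχmk, hpiCdef]
    exact AddMonoidHom.completion_coe π hπc g
  have hright : ∀ y : Completion ((M₁ ⧸ Λ₁) ⊗[ℤ] (M₂ ⧸ Λ₂)), χ (phiC y) = y := by
    have h7 : ⇑χ ∘ ⇑phiC = id := by
      apply Completion.ext (hχc.comp hphiCc) continuous_id
      intro a
      simp only [Function.comp_apply, id_eq]
      rw [hphiCcoe a, hχφ a]
    exact fun y => congrFun h7 y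
  have hleft : ∀ x : Completion (M₁ ⊗[ℤ] M₂) ⧸ N, phiC (χ x) = x := by
    have hd : DenseRange (fun g : M₁ ⊗[ℤ] M₂ =>
        (QuotientAddGroup.mk (Completion.toCompl g) : Completion (M₁ ⊗[ℤ] M₂) ⧸ N)) := by
      have h8 : DenseRange (QuotientAddGroup.mk :
          Completion (M₁ ⊗[ℤ] M₂) → Completion (M₁ ⊗[ℤ] M₂) ⧸ N) :=
        QuotientAddGroup.mk_surjective.denseRange
      exact h8.comp Completion.denseRange_coe hmkc
    have h9 : ⇑phiC ∘ ⇑χ = id := by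
      apply hd.equalizer (hphiCc.comp hχc) continuous_id
      funext g
      simp only [Function.comp_apply, id_eq]
      rw [hχmk, hts g, hpiCdef, AddMonoidHom.completion_coe π hπc g]
      rw [hphiCcoe (π g), hφπ g]
      rfl
    exact fun x => congrFun h9 x
  refine ⟨{ toFun := χ, invFun := phiC, left_inv := hleft, right_inv := hright,
            map_add' := χ.map_add }, hχc, hphiCc, ?_⟩
  intro m₁ m₂
  show χ (QuotientAddGroup.mk (Completion.toCompl (m₁ ⊗ₜ[ℤ] m₂))) = _
  rw [hχmk, hts _, hpiCdef, AddMonoidHom.completion_coe π hπc]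
  rfl
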